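/- Let α > 0 and suppose a : ℝ → [α,∞) and f : ℝ → ℝ are slowly oscillating in the classical sense (bounded, uniformly continuous, and such that for each ω ∈ ℝ, lim_{|t|→+∞} |g(t+ω) − g(t)| = 0, where g stands for a or f). Then the function F : ℝ → ℝ defined by F(t) := ∫_{−∞}^{t} e^{−∫_{s}^{t} a(r) dr}·f(s) ds is slowly oscillating in the same sense: it is bounded, uniformly continuous, and for each ω ∈ ℝ, lim_{|t|→+∞} |F(t+ω) − F(t)| = 0. -/

import Mathlib

open MeasureTheory intervalIntegral

/-- `g : ℝ → ℝ` is slowly oscillating in the classical sense: bounded, uniformly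
continuous, and `|g(t+ω) - g(t)| → 0` as `|t| → +∞` for every `ω ∈ ℝ`. -/
def SlowlyOscillating (g : ℝ → ℝ) : Prop :=
  (∃ C : ℝ, ∀ t : ℝ, |g t| ≤ C) ∧ UniformContinuous g ∧
    ∀ ω : ℝ, ∀ ε > (0 : ℝ), ∃ M : ℝ, ∀ t : ℝ, M ≤ |t| → |g (t + ω) - g t| < ε

section SOHelpers
open Set Real

lemma soIic_shift (g : ℝ → ℝ) (c ω : ℝ) :
    ∫ s in Set.Iic (c+ω), g s = ∫ s in Set.Iic c, g (s+ω) := by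
  rw [← MeasureTheory.integral_indicator measurableSet_Iic, ← MeasureTheory.integral_indicator measurableSet_Iic]
  rw [← MeasureTheory.integral_add_right_eq_self (Set.indicator (Set.Iic (c+ω)) g) ω]
  congr 1
  ext s
  simp only [Set.indicator, Set.mem_Iic]
  by_cases h : s ≤ c <;> simp [h, add_le_add_iff_right]

lemma soAbs_exp_sub_one (x : ℝ) : |Real.exp x - 1| ≤ Real.exp |x| - 1 := by
  rcases le_or_gt 0 x with h | h
  · rw [abs_of_nonneg h, abs_of_nonneg (by linarith [Real.one_le_exp h])]
  · rw [abs_of_neg h, abs_of_nonpos (by linarith [Real.exp_lt_one_iff.mpr h] : Real.exp x - 1 ≤ 0)]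
    have h1 := Real.add_one_le_exp x
    have h2 := Real.add_one_le_exp (-x)
    linarith


lemma soExp_interval (b t y c : ℝ) (hb : b ≠ 0) :
    ∫ x in y..c, Real.exp (b*(x-t)) = Real.exp (b*(c-t))/b - Real.exp (b*(y-t))/b := by
  have hd : ∀ x : ℝ, HasDerivAt (fun x => Real.exp (b*(x-t))/b) (Real.exp (b*(x-t))) x := by
    intro x
    have : HasDerivAt (fun x : ℝ => b*(x-t)) b x := by
      simpa using ((hasDerivAt_id x).sub_const t).const_mul b
    have := (this.exp).div_const b
    simpa [mul_div_assoc, mul_div_cancel_right₀, hb] using this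
  rw [intervalIntegral.integral_eq_sub_of_hasDerivAt (fun x _ => hd x)
    ((Real.continuous_exp.comp (by continuity)).intervalIntegrable _ _)]

lemma soExp_integrableOn (b t c : ℝ) (hb : 0 < b) :
    IntegrableOn (fun s => Real.exp (b*(s-t))) (Set.Iic c) := by
  refine integrableOn_Iic_of_intervalIntegral_norm_bounded (Real.exp (b*(c-t))/b) c
    (fun i : ℝ => ((Real.continuous_exp.comp (by continuity)).integrableOn_Ioc)) Filter.tendsto_id
    (Filter.Eventually.of_forall fun y => ?_)
  simp only [id]
  have : (∫ x in y..c, ‖Real.exp (b*(x-t))‖) = ∫ x in y..c, Real.exp (b*(x-t)) := by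
    simp [Real.norm_of_nonneg (Real.exp_pos _).le, Real.abs_exp]
  rw [this, soExp_interval b t y c hb.ne']
  have := (Real.exp_pos (b*(y-t))).le
  have h2 : 0 ≤ Real.exp (b*(y-t))/b := div_nonneg this hb.le
  linarith

lemma soExp_integral (b t c : ℝ) (hb : 0 < b) :
    ∫ s in Set.Iic c, Real.exp (b*(s-t)) = Real.exp (b*(c-t))/b := by
  have hd : ∀ x ∈ Set.Iic c, HasDerivAt (fun x => Real.exp (b*(x-t))/b) (Real.exp (b*(x-t))) x := by
    intro x _
    have : HasDerivAt (fun x : ℝ => b*(x-t)) b x := by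
      simpa using ((hasDerivAt_id x).sub_const t).const_mul b
    have := (this.exp).div_const b
    simpa [mul_div_assoc, mul_div_cancel_right₀, hb.ne'] using this
  have htend : Filter.Tendsto (fun x => Real.exp (b*(x-t))/b) Filter.atBot (nhds 0) := by
    have h1 : Filter.Tendsto (fun x : ℝ => b*(x-t)) Filter.atBot Filter.atBot := by
      apply Filter.Tendsto.const_mul_atBot hb
      exact Filter.tendsto_atBot_add_const_right _ _ Filter.tendsto_id
    have := (Real.tendsto_exp_atBot.comp h1).div_const b
    simpa using this
  have := MeasureTheory.integral_Iic_of_hasDerivAt_of_tendsto' hd (soExp_integrableOn b t c hb) htend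
  simpa using this


lemma soKey (α : ℝ) (a : ℝ → ℝ) (ha : ∀ r, α ≤ a r) (hac : Continuous a) {s t : ℝ} (hst : s ≤ t) :
    α * (t - s) ≤ ∫ r in s..t, a r := by
  have h := intervalIntegral.integral_mono_on hst (_root_.intervalIntegrable_const (μ := volume) (c := α))
    (hac.intervalIntegrable s t) (fun x _ => ha x)
  simpa [smul_eq_mul, mul_comm] using h

lemma soExpBound (α : ℝ) (a : ℝ → ℝ) (ha : ∀ r, α ≤ a r) (hac : Continuous a) {s t : ℝ}
    (hst : s ≤ t) : Real.exp (-(∫ r in s..t, a r)) ≤ Real.exp (α*(s-t)) := by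
  apply Real.exp_le_exp.2
  have := soKey α a ha hac hst
  nlinarith [this]

lemma soCont (a : ℝ → ℝ) (hac : Continuous a) (f : ℝ → ℝ) (hfc : Continuous f) (t : ℝ) :
    Continuous fun s => Real.exp (-(∫ r in s..t, a r)) * f s := by
  have h1 : Continuous fun s => ∫ r in t..s, a r :=
    intervalIntegral.continuous_primitive (fun u v => hac.intervalIntegrable u v) t
  have h2 : Continuous fun s => ∫ r in s..t, a r := by
    have := h1.neg
    apply Continuous.congr this
    intro x
    exact (intervalIntegral.integral_symm t x).symm
  exact (Real.continuous_exp.comp h2.neg).mul hfc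

lemma soIntegrableOn (α : ℝ) (hα : 0 < α) (a : ℝ → ℝ) (ha : ∀ r, α ≤ a r) (hac : Continuous a)
    (f : ℝ → ℝ) (hfc : Continuous f) (Cf : ℝ) (hCf : ∀ r, |f r| ≤ Cf) (t : ℝ) :
    IntegrableOn (fun s => Real.exp (-(∫ r in s..t, a r)) * f s) (Set.Iic t) := by
  apply Integrable.mono' ((soExp_integrableOn α t t hα).const_mul Cf)
    ((soCont a hac f hfc t).aestronglyMeasurable.restrict)
  refine (ae_restrict_iff' measurableSet_Iic).2 (Filter.Eventually.of_forall fun s hs => ?_)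
  have h1 := soExpBound α a ha hac (hs : s ≤ t)
  have h2 := hCf s
  have h3 := (Real.exp_pos (-(∫ r in s..t, a r))).le
  have h4 := (Real.exp_pos (α*(s-t))).le
  have h5 := (abs_nonneg (f s)).trans h2
  calc ‖Real.exp (-(∫ r in s..t, a r)) * f s‖ = Real.exp (-(∫ r in s..t, a r)) * |f s| := by
        rw [norm_mul, Real.norm_of_nonneg h3, Real.norm_eq_abs]
    _ ≤ Real.exp (α*(s-t)) * Cf := by nlinarith
    _ = Cf * Real.exp (α*(s-t)) := mul_comm _ _

lemma soBound (α : ℝ) (hα : 0 < α) (a : ℝ → ℝ) (ha : ∀ r, α ≤ a r) (hac : Continuous a)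
    (f : ℝ → ℝ) (hfc : Continuous f) (Cf : ℝ) (hCf : ∀ r, |f r| ≤ Cf) (t : ℝ) :
    |∫ s in Set.Iic t, Real.exp (-(∫ r in s..t, a r)) * f s| ≤ Cf/α := by
  rw [← Real.norm_eq_abs]
  have h := MeasureTheory.norm_integral_le_of_norm_le (μ := volume.restrict (Set.Iic t))
    (f := fun s => Real.exp (-(∫ r in s..t, a r)) * f s)
    (g := fun s => Cf * Real.exp (α*(s-t)))
    ((soExp_integrableOn α t t hα).const_mul Cf)
    ((ae_restrict_iff' measurableSet_Iic).2 (Filter.Eventually.of_forall fun s hs => by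
      have h1 := soExpBound α a ha hac (hs : s ≤ t)
      have h2 := hCf s
      have h3 := (Real.exp_pos (-(∫ r in s..t, a r))).le
      have h4 := (Real.exp_pos (α*(s-t))).le
      have h5 := (abs_nonneg (f s)).trans h2
      show _ ≤ Cf * Real.exp (α*(s-t))
      rw [norm_mul, Real.norm_of_nonneg h3, Real.norm_eq_abs]
      nlinarith))
  refine h.trans ?_
  rw [MeasureTheory.integral_const_mul, soExp_integral α t t hα]
  simp [div_eq_mul_inv]

lemma soLip (α : ℝ) (hα : 0 < α) (a : ℝ → ℝ) (ha : ∀ r, α ≤ a r) (hac : Continuous a)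
    (Ca : ℝ) (hCa : ∀ r, a r ≤ Ca)
    (f : ℝ → ℝ) (hfc : Continuous f) (Cf : ℝ) (hCf : ∀ r, |f r| ≤ Cf) {t t' : ℝ} (h : t ≤ t') :
    |(∫ s in Set.Iic t', Real.exp (-(∫ r in s..t', a r)) * f s) -
      ∫ s in Set.Iic t, Real.exp (-(∫ r in s..t, a r)) * f s| ≤
      (Cf + Cf*Ca/α) * (t'-t) := by
  have hCf0 : 0 ≤ Cf := (abs_nonneg _).trans (hCf 0)
  have hint1 : IntegrableOn (fun s => Real.exp (-(∫ r in s..t', a r)) * f s) (Set.Iic t) :=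
    (soIntegrableOn α hα a ha hac f hfc Cf hCf t').mono_set (Set.Iic_subset_Iic.2 h)
  have hint1' : IntegrableOn (fun s => Real.exp (-(∫ r in s..t, a r)) * f s) (Set.Iic t) :=
    soIntegrableOn α hα a ha hac f hfc Cf hCf t
  have hint2 : IntegrableOn (fun s => Real.exp (-(∫ r in s..t', a r)) * f s) (Set.Ioc t t') :=
    (soIntegrableOn α hα a ha hac f hfc Cf hCf t').mono_set Set.Ioc_subset_Iic_self
  have hsplit : (∫ s in Set.Iic t', Real.exp (-(∫ r in s..t', a r)) * f s) =
      (∫ s in Set.Iic t, Real.exp (-(∫ r in s..t', a r)) * f s) +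
      ∫ s in Set.Ioc t t', Real.exp (-(∫ r in s..t', a r)) * f s := by
    rw [← MeasureTheory.setIntegral_union (Set.Iic_disjoint_Ioc le_rfl) measurableSet_Ioc
      hint1 hint2, Set.Iic_union_Ioc_eq_Iic h]
  have hdiff : (∫ s in Set.Iic t, Real.exp (-(∫ r in s..t', a r)) * f s) -
      (∫ s in Set.Iic t, Real.exp (-(∫ r in s..t, a r)) * f s) =
      ∫ s in Set.Iic t, (Real.exp (-(∫ r in s..t', a r)) * f s -
        Real.exp (-(∫ r in s..t, a r)) * f s) := (MeasureTheory.integral_sub hint1 hint1').symm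
  -- bound on first piece
  have hb1 : |∫ s in Set.Iic t, (Real.exp (-(∫ r in s..t', a r)) * f s -
      Real.exp (-(∫ r in s..t, a r)) * f s)| ≤ Cf*Ca/α * (t'-t) := by
    rw [← Real.norm_eq_abs]
    have key := MeasureTheory.norm_integral_le_of_norm_le (μ := volume.restrict (Set.Iic t))
      (f := fun s => Real.exp (-(∫ r in s..t', a r)) * f s -
        Real.exp (-(∫ r in s..t, a r)) * f s)
      (g := fun s => (Cf * (Ca * (t'-t))) * Real.exp (α*(s-t)))
      ((soExp_integrableOn α t t hα).const_mul _)
      ((ae_restrict_iff' measurableSet_Iic).2 (Filter.Eventually.of_forall fun s hs => by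
        show ‖Real.exp (-(∫ r in s..t', a r)) * f s - Real.exp (-(∫ r in s..t, a r)) * f s‖ ≤
          Cf * (Ca * (t'-t)) * Real.exp (α*(s-t))
        have hst : s ≤ t := hs
        have hadd : (∫ r in s..t', a r) = (∫ r in s..t, a r) + ∫ r in t..t', a r :=
          (intervalIntegral.integral_add_adjacent_intervals (hac.intervalIntegrable s t)
            (hac.intervalIntegrable t t')).symm
        set I1 := ∫ r in s..t, a r
        set I2 := ∫ r in t..t', a r
        have hI2nn : 0 ≤ I2 := le_trans (by nlinarith) (soKey α a ha hac h)
        have hI2le : I2 ≤ Ca * (t'-t) := by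
          have := intervalIntegral.integral_mono_on h (hac.intervalIntegrable t t')
            (_root_.intervalIntegrable_const (μ := volume) (c := Ca)) (fun x _ => hCa x)
          simpa [smul_eq_mul, mul_comm] using this
        have heq : Real.exp (-(I1 + I2)) * f s - Real.exp (-I1) * f s =
            Real.exp (-I1) * ((Real.exp (-I2) - 1) * f s) := by
          rw [neg_add, Real.exp_add]; ring
        rw [hadd, heq]
        have h1 := soExpBound α a ha hac hst
        have he1 : |Real.exp (-I2) - 1| ≤ I2 := by
          have h2 : Real.exp (-I2) ≤ 1 := Real.exp_le_one_iff.2 (by linarith)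
          have h3 := Real.add_one_le_exp (-I2)
          rw [abs_of_nonpos (by linarith)]
          linarith
        rw [norm_mul, Real.norm_of_nonneg (Real.exp_pos _).le, norm_mul, Real.norm_eq_abs,
          Real.norm_eq_abs]
        have h1' : Real.exp (-I1) ≤ Real.exp (α*(s-t)) := h1
        have h5 := (Real.exp_pos (α*(s-t))).le
        have h6 := hCf s
        have h7 := abs_nonneg (f s)
        have h8 := abs_nonneg (Real.exp (-I2) - 1)
        have h9 : 0 ≤ Ca * (t'-t) := hI2nn.trans hI2le
        calc Real.exp (-I1) * (|Real.exp (-I2) - 1| * |f s|)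
            ≤ Real.exp (α*(s-t)) * ((Ca*(t'-t)) * Cf) :=
              mul_le_mul h1' (mul_le_mul (he1.trans hI2le) h6 h7 h9)
                (mul_nonneg h8 h7) h5
          _ = Cf * (Ca * (t'-t)) * Real.exp (α*(s-t)) := by ring))
    refine key.trans ?_
    rw [MeasureTheory.integral_const_mul, soExp_integral α t t hα]
    rw [sub_self, mul_zero, Real.exp_zero]
    apply le_of_eq; ring
  -- bound on second piece
  have hb2 : |∫ s in Set.Ioc t t', Real.exp (-(∫ r in s..t', a r)) * f s| ≤ Cf * (t'-t) := by
    rw [← Real.norm_eq_abs]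
    have hC : ∀ s ∈ Set.Ioc t t', ‖Real.exp (-(∫ r in s..t', a r)) * f s‖ ≤ Cf := by
      intro s hs
      have hst' : s ≤ t' := hs.2
      have hE : Real.exp (-(∫ r in s..t', a r)) ≤ 1 := by
        apply Real.exp_le_one_iff.2
        have := soKey α a ha hac hst'
        nlinarith
      rw [norm_mul, Real.norm_of_nonneg (Real.exp_pos _).le, Real.norm_eq_abs]
      have h6 := hCf s
      have h7 := abs_nonneg (f s)
      have h8 := (Real.exp_pos (-(∫ r in s..t', a r))).le
      nlinarith
    have key := MeasureTheory.norm_setIntegral_le_of_norm_le_const (μ := volume)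
      (s := Set.Ioc t t') (C := Cf)
      (f := fun s => Real.exp (-(∫ r in s..t', a r)) * f s)
      (by rw [Real.volume_Ioc]; exact ENNReal.ofReal_lt_top) hC
    refine key.trans ?_
    rw [Real.volume_real_Ioc_of_le h]
  calc |(∫ s in Set.Iic t', Real.exp (-(∫ r in s..t', a r)) * f s) -
      ∫ s in Set.Iic t, Real.exp (-(∫ r in s..t, a r)) * f s|
      = |(∫ s in Set.Iic t, (Real.exp (-(∫ r in s..t', a r)) * f s -
          Real.exp (-(∫ r in s..t, a r)) * f s)) +
          ∫ s in Set.Ioc t t', Real.exp (-(∫ r in s..t', a r)) * f s| := by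
        rw [hsplit, ← hdiff]; ring_nf
    _ ≤ _ + _ := abs_add_le _ _
    _ ≤ Cf*Ca/α * (t'-t) + Cf * (t'-t) := add_le_add hb1 hb2
    _ = (Cf + Cf*Ca/α) * (t'-t) := by ring

lemma soOscBound (α : ℝ) (hα : 0 < α) (a : ℝ → ℝ) (ha : ∀ r, α ≤ a r) (hac : Continuous a)
    (f : ℝ → ℝ) (hfc : Continuous f) (Cf : ℝ) (hCf : ∀ r, |f r| ≤ Cf)
    (ω : ℝ) (δ T t : ℝ) (hδ0 : 0 < δ) (hδα : δ ≤ α/2) (hT : 0 ≤ T)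
    (hfd : ∀ s, t - T ≤ s → s ≤ t → |f (s+ω) - f s| ≤ δ)
    (had : ∀ s, t - T ≤ s → s ≤ t → |a (s+ω) - a s| ≤ δ) :
    |(∫ s in Set.Iic t, Real.exp (-(∫ r in s..t, a (r+ω))) * f (s+ω)) -
      ∫ s in Set.Iic t, Real.exp (-(∫ r in s..t, a r)) * f s| ≤
      2*Cf*Real.exp (-(α*T))/α + (δ*T + Cf*(2*δ/α^2)) := by
  have hCf0 : 0 ≤ Cf := (abs_nonneg _).trans (hCf 0)
  set a' : ℝ → ℝ := fun r => a (r+ω) with ha'def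
  set f' : ℝ → ℝ := fun s => f (s+ω) with hf'def
  have ha' : ∀ r, α ≤ a' r := fun r => ha (r+ω)
  have hac' : Continuous a' := hac.comp (continuous_id.add continuous_const)
  have hfc' : Continuous f' := hfc.comp (continuous_id.add continuous_const)
  have hCf' : ∀ r, |f' r| ≤ Cf := fun r => hCf (r+ω)
  have hαδ : 0 < α - δ := by linarith
  have hintG : IntegrableOn (fun s => Real.exp (-(∫ r in s..t, a' r)) * f' s) (Set.Iic t) :=
    soIntegrableOn α hα a' ha' hac' f' hfc' Cf hCf' t
  have hintg : IntegrableOn (fun s => Real.exp (-(∫ r in s..t, a r)) * f s) (Set.Iic t) :=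
    soIntegrableOn α hα a ha hac f hfc Cf hCf t
  have hdiff : (∫ s in Set.Iic t, Real.exp (-(∫ r in s..t, a' r)) * f' s) -
      (∫ s in Set.Iic t, Real.exp (-(∫ r in s..t, a r)) * f s) =
      ∫ s in Set.Iic t, (Real.exp (-(∫ r in s..t, a' r)) * f' s -
        Real.exp (-(∫ r in s..t, a r)) * f s) := (MeasureTheory.integral_sub hintG hintg).symm
  have hDint : IntegrableOn (fun s => Real.exp (-(∫ r in s..t, a' r)) * f' s -
      Real.exp (-(∫ r in s..t, a r)) * f s) (Set.Iic t) := hintG.sub hintg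
  have htT : t - T ≤ t := by linarith
  have hsplit : (∫ s in Set.Iic t, (Real.exp (-(∫ r in s..t, a' r)) * f' s -
        Real.exp (-(∫ r in s..t, a r)) * f s)) =
      (∫ s in Set.Iic (t-T), (Real.exp (-(∫ r in s..t, a' r)) * f' s -
        Real.exp (-(∫ r in s..t, a r)) * f s)) +
      ∫ s in Set.Ioc (t-T) t, (Real.exp (-(∫ r in s..t, a' r)) * f' s -
        Real.exp (-(∫ r in s..t, a r)) * f s) := by
    rw [← MeasureTheory.setIntegral_union (Set.Iic_disjoint_Ioc le_rfl) measurableSet_Ioc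
      (hDint.mono_set (Set.Iic_subset_Iic.2 htT)) (hDint.mono_set Set.Ioc_subset_Iic_self),
      Set.Iic_union_Ioc_eq_Iic htT]
  -- Piece A : tail
  have hA : |∫ s in Set.Iic (t-T), (Real.exp (-(∫ r in s..t, a' r)) * f' s -
      Real.exp (-(∫ r in s..t, a r)) * f s)| ≤ 2*Cf*Real.exp (-(α*T))/α := by
    rw [← Real.norm_eq_abs]
    have key := MeasureTheory.norm_integral_le_of_norm_le
      (μ := volume.restrict (Set.Iic (t-T)))
      (f := fun s => Real.exp (-(∫ r in s..t, a' r)) * f' s -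
        Real.exp (-(∫ r in s..t, a r)) * f s)
      (g := fun s => (2*Cf*Real.exp (-(α*T))) * Real.exp (α*(s-(t-T))))
      ((soExp_integrableOn α (t-T) (t-T) hα).const_mul _)
      ((ae_restrict_iff' measurableSet_Iic).2 (Filter.Eventually.of_forall fun s hs => by
        have hst : s ≤ t := le_trans hs htT
        show ‖Real.exp (-(∫ r in s..t, a' r)) * f' s - Real.exp (-(∫ r in s..t, a r)) * f s‖ ≤
          (2*Cf*Real.exp (-(α*T))) * Real.exp (α*(s-(t-T)))
        have e1 : Real.exp (α*(s-t)) = Real.exp (-(α*T)) * Real.exp (α*(s-(t-T))) := by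
          rw [← Real.exp_add]; ring_nf
        have b1 : ‖Real.exp (-(∫ r in s..t, a' r)) * f' s‖ ≤ Cf * Real.exp (α*(s-t)) := by
          rw [norm_mul, Real.norm_of_nonneg (Real.exp_pos _).le, Real.norm_eq_abs]
          have := soExpBound α a' ha' hac' hst
          have h6 := hCf' s
          have h7 := abs_nonneg (f' s)
          nlinarith [(Real.exp_pos (α*(s-t))).le, (Real.exp_pos (-(∫ r in s..t, a' r))).le]
        have b2 : ‖Real.exp (-(∫ r in s..t, a r)) * f s‖ ≤ Cf * Real.exp (α*(s-t)) := by
          rw [norm_mul, Real.norm_of_nonneg (Real.exp_pos _).le, Real.norm_eq_abs]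
          have := soExpBound α a ha hac hst
          have h6 := hCf s
          have h7 := abs_nonneg (f s)
          nlinarith [(Real.exp_pos (α*(s-t))).le, (Real.exp_pos (-(∫ r in s..t, a r))).le]
        calc ‖Real.exp (-(∫ r in s..t, a' r)) * f' s - Real.exp (-(∫ r in s..t, a r)) * f s‖
            ≤ ‖Real.exp (-(∫ r in s..t, a' r)) * f' s‖ +
              ‖Real.exp (-(∫ r in s..t, a r)) * f s‖ := norm_sub_le _ _
          _ ≤ Cf * Real.exp (α*(s-t)) + Cf * Real.exp (α*(s-t)) := add_le_add b1 b2
          _ = (2*Cf*Real.exp (-(α*T))) * Real.exp (α*(s-(t-T))) := by rw [e1]; ring))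
    refine key.trans ?_
    rw [MeasureTheory.integral_const_mul, soExp_integral α (t-T) (t-T) hα]
    rw [sub_self, mul_zero, Real.exp_zero]
    apply le_of_eq; ring
  -- Piece B : main window
  have hB : |∫ s in Set.Ioc (t-T) t, (Real.exp (-(∫ r in s..t, a' r)) * f' s -
      Real.exp (-(∫ r in s..t, a r)) * f s)| ≤ δ*T + Cf*(2*δ/α^2) := by
    rw [← Real.norm_eq_abs]
    have hE12 : ∀ s : ℝ, s ≤ t → Real.exp (α*(s-t)) ≤ Real.exp ((α-δ)*(s-t)) := by
      intro s hst
      apply Real.exp_le_exp.2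
      nlinarith
    have hpt : ∀ s ∈ Set.Ioc (t-T) t,
        ‖Real.exp (-(∫ r in s..t, a' r)) * f' s - Real.exp (-(∫ r in s..t, a r)) * f s‖ ≤
        δ + Cf*(Real.exp ((α-δ)*(s-t)) - Real.exp (α*(s-t))) := by
      intro s hs
      have hs1 : t - T ≤ s := hs.1.le
      have hst : s ≤ t := hs.2
      have hDa : |∫ r in s..t, (a' r - a r)| ≤ δ*(t-s) := by
        have h := intervalIntegral.norm_integral_le_of_norm_le_const (C := δ)
          (f := fun r => a' r - a r) (a := s) (b := t) (fun x hx => by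
            rw [Set.uIoc_of_le hst] at hx
            have := had x (le_trans hs1 hx.1.le) hx.2
            simpa [Real.norm_eq_abs] using this)
        rw [Real.norm_eq_abs] at h
        rwa [abs_of_nonneg (by linarith : (0:ℝ) ≤ t - s)] at h
      have hsub : (∫ r in s..t, a' r) = (∫ r in s..t, a r) + ∫ r in s..t, (a' r - a r) := by
        rw [intervalIntegral.integral_sub (hac'.intervalIntegrable s t)
          (hac.intervalIntegrable s t)]
        ring
      have hGg : Real.exp (-(∫ r in s..t, a' r)) =
          Real.exp (-(∫ r in s..t, a r)) * Real.exp (-(∫ r in s..t, (a' r - a r))) := by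
        rw [hsub, neg_add, Real.exp_add]
      have hgle : Real.exp (-(∫ r in s..t, a r)) ≤ Real.exp (α*(s-t)) :=
        soExpBound α a ha hac hst
      have hGone : Real.exp (-(∫ r in s..t, a' r)) ≤ 1 := by
        apply Real.exp_le_one_iff.2
        have := soKey α a' ha' hac' hst
        nlinarith
      have hdiffGg : |Real.exp (-(∫ r in s..t, a' r)) - Real.exp (-(∫ r in s..t, a r))| ≤
          Real.exp ((α-δ)*(s-t)) - Real.exp (α*(s-t)) := by
        have hfac : Real.exp (-(∫ r in s..t, a r)) * Real.exp (-(∫ r in s..t, (a' r - a r))) -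
            Real.exp (-(∫ r in s..t, a r)) =
            Real.exp (-(∫ r in s..t, a r)) * (Real.exp (-(∫ r in s..t, (a' r - a r))) - 1) := by
          ring
        rw [hGg, hfac, abs_mul, abs_of_nonneg (Real.exp_pos _).le]
        have h1 : |Real.exp (-(∫ r in s..t, (a' r - a r))) - 1| ≤ Real.exp (δ*(t-s)) - 1 := by
          refine (soAbs_exp_sub_one _).trans ?_
          have h2 : |-(∫ r in s..t, (a' r - a r))| ≤ δ*(t-s) := by rwa [abs_neg]
          have h3 := Real.exp_le_exp.2 h2
          linarith
        have e2 : Real.exp (α*(s-t)) * Real.exp (δ*(t-s)) = Real.exp ((α-δ)*(s-t)) := by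
          rw [← Real.exp_add]; ring_nf
        have hEnn := (Real.exp_pos (α*(s-t))).le
        calc Real.exp (-(∫ r in s..t, a r)) * |Real.exp (-(∫ r in s..t, (a' r - a r))) - 1|
            ≤ Real.exp (α*(s-t)) * (Real.exp (δ*(t-s)) - 1) :=
              mul_le_mul hgle h1 (abs_nonneg _) hEnn
          _ = Real.exp ((α-δ)*(s-t)) - Real.exp (α*(s-t)) := by rw [← e2]; ring
      have hkey : Real.exp (-(∫ r in s..t, a' r)) * f' s -
          Real.exp (-(∫ r in s..t, a r)) * f s =
          Real.exp (-(∫ r in s..t, a' r)) * (f' s - f s) +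
          (Real.exp (-(∫ r in s..t, a' r)) - Real.exp (-(∫ r in s..t, a r))) * f s := by ring
      rw [hkey, Real.norm_eq_abs]
      have hGnn := (Real.exp_pos (-(∫ r in s..t, a' r))).le
      have t1 : |Real.exp (-(∫ r in s..t, a' r)) * (f' s - f s)| ≤ δ := by
        rw [abs_mul, abs_of_nonneg hGnn]
        have := hfd s hs1 hst
        nlinarith [abs_nonneg (f' s - f s)]
      have t2 : |(Real.exp (-(∫ r in s..t, a' r)) - Real.exp (-(∫ r in s..t, a r))) * f s| ≤
          (Real.exp ((α-δ)*(s-t)) - Real.exp (α*(s-t))) * Cf := by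
        rw [abs_mul]
        exact mul_le_mul hdiffGg (hCf s) (abs_nonneg _)
          (sub_nonneg.2 (hE12 s hst))
      calc |Real.exp (-(∫ r in s..t, a' r)) * (f' s - f s) +
          (Real.exp (-(∫ r in s..t, a' r)) - Real.exp (-(∫ r in s..t, a r))) * f s|
          ≤ |Real.exp (-(∫ r in s..t, a' r)) * (f' s - f s)| +
            |(Real.exp (-(∫ r in s..t, a' r)) - Real.exp (-(∫ r in s..t, a r))) * f s| :=
              abs_add_le _ _
        _ ≤ δ + (Real.exp ((α-δ)*(s-t)) - Real.exp (α*(s-t))) * Cf := add_le_add t1 t2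
        _ = δ + Cf*(Real.exp ((α-δ)*(s-t)) - Real.exp (α*(s-t))) := by ring
    have hdom : IntegrableOn (fun s => δ + Cf*(Real.exp ((α-δ)*(s-t)) - Real.exp (α*(s-t))))
        (Set.Ioc (t-T) t) := by
      apply Continuous.integrableOn_Ioc
      fun_prop
    have key := MeasureTheory.norm_integral_le_of_norm_le
      (μ := volume.restrict (Set.Ioc (t-T) t))
      (f := fun s => Real.exp (-(∫ r in s..t, a' r)) * f' s -
        Real.exp (-(∫ r in s..t, a r)) * f s)
      (g := fun s => δ + Cf*(Real.exp ((α-δ)*(s-t)) - Real.exp (α*(s-t))))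
      hdom ((ae_restrict_iff' measurableSet_Ioc).2 (Filter.Eventually.of_forall hpt))
    refine key.trans ?_
    have hint_h : IntegrableOn (fun s => Real.exp ((α-δ)*(s-t)) - Real.exp (α*(s-t)))
        (Set.Iic t) := (soExp_integrableOn (α-δ) t t hαδ).sub (soExp_integrableOn α t t hα)
    have hint_hIoc := hint_h.mono_set (Set.Ioc_subset_Iic_self (a := t-T) (b := t))
    have hconst : IntegrableOn (fun _ : ℝ => δ) (Set.Ioc (t-T) t) := by
      refine integrableOn_const ?_
      rw [Real.volume_Ioc]
      exact ENNReal.ofReal_ne_top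
    rw [MeasureTheory.integral_add hconst (hint_hIoc.const_mul Cf)]
    have hpart1 : (∫ _ in Set.Ioc (t-T) t, δ) = δ*T := by
      rw [MeasureTheory.setIntegral_const, Real.volume_real_Ioc_of_le htT, sub_sub_cancel,
        smul_eq_mul, mul_comm]
    have hpart2 : (∫ s in Set.Ioc (t-T) t, Cf*(Real.exp ((α-δ)*(s-t)) - Real.exp (α*(s-t)))) ≤
        Cf*(2*δ/α^2) := by
      rw [MeasureTheory.integral_const_mul]
      apply mul_le_mul_of_nonneg_left ?_ hCf0
      have step1 : (∫ s in Set.Ioc (t-T) t, (Real.exp ((α-δ)*(s-t)) - Real.exp (α*(s-t)))) ≤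
          ∫ s in Set.Iic t, (Real.exp ((α-δ)*(s-t)) - Real.exp (α*(s-t))) := by
        apply MeasureTheory.setIntegral_mono_set hint_h
        · exact (ae_restrict_iff' measurableSet_Iic).2 (Filter.Eventually.of_forall fun s hs =>
            sub_nonneg.2 (hE12 s hs))
        · exact HasSubset.Subset.eventuallyLE Set.Ioc_subset_Iic_self
      refine step1.trans ?_
      rw [MeasureTheory.integral_sub (soExp_integrableOn (α-δ) t t hαδ)
        (soExp_integrableOn α t t hα), soExp_integral (α-δ) t t hαδ, soExp_integral α t t hα,
        sub_self, mul_zero, mul_zero, Real.exp_zero]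
      rw [div_sub_div _ _ hαδ.ne' hα.ne', div_le_div_iff₀ (by positivity) (by positivity)]
      nlinarith [mul_nonneg (mul_nonneg hδ0.le hα.le) (show (0:ℝ) ≤ α - 2*δ by linarith)]
    rw [hpart1]
    exact add_le_add le_rfl hpart2
  calc |(∫ s in Set.Iic t, Real.exp (-(∫ r in s..t, a' r)) * f' s) -
      ∫ s in Set.Iic t, Real.exp (-(∫ r in s..t, a r)) * f s|
      = |(∫ s in Set.Iic (t-T), (Real.exp (-(∫ r in s..t, a' r)) * f' s -
          Real.exp (-(∫ r in s..t, a r)) * f s)) +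
        ∫ s in Set.Ioc (t-T) t, (Real.exp (-(∫ r in s..t, a' r)) * f' s -
          Real.exp (-(∫ r in s..t, a r)) * f s)| := by rw [hdiff, hsplit]
    _ ≤ _ + _ := abs_add_le _ _
    _ ≤ 2*Cf*Real.exp (-(α*T))/α + (δ*T + Cf*(2*δ/α^2)) := add_le_add hA hB

end SOHelpers

/-- **Lemma (tehno).** Let `α > 0` and suppose `a : ℝ → [α,∞)` and `f : ℝ → ℝ` are
slowly oscillating. Then `F(t) := ∫_{-∞}^t e^{-∫_s^t a(r) dr} f(s) ds` is slowly
oscillating as well. -/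
theorem stmt_18 (α : ℝ) (hα : 0 < α) (a f : ℝ → ℝ) (ha : ∀ t, α ≤ a t)
    (hsa : SlowlyOscillating a) (hsf : SlowlyOscillating f) :
    SlowlyOscillating (fun t => ∫ s in Set.Iic t, Real.exp (-(∫ r in s..t, a r)) * f s) := by
  obtain ⟨Ca, hCa'⟩ := hsa.1
  obtain ⟨Cf, hCf⟩ := hsf.1
  have hac : Continuous a := hsa.2.1.continuous
  have hfc : Continuous f := hsf.2.1.continuous
  have hCa : ∀ r, a r ≤ Ca := fun r => (le_abs_self _).trans (hCa' r)
  have hCf0 : 0 ≤ Cf := (abs_nonneg _).trans (hCf 0)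
  have hCa0 : 0 ≤ Ca := (abs_nonneg _).trans (hCa' 0)
  refine ⟨⟨Cf/α, fun t => soBound α hα a ha hac f hfc Cf hCf t⟩, ?_, ?_⟩
  · -- uniform continuity
    set L := Cf + Cf*Ca/α with hLdef
    have hL0 : 0 ≤ L := by
      have : 0 ≤ Cf*Ca/α := div_nonneg (mul_nonneg hCf0 hCa0) hα.le
      rw [hLdef]; linarith
    apply LipschitzWith.uniformContinuous (K := Real.toNNReal L)
    apply LipschitzWith.of_dist_le_mul
    intro x y
    show dist (∫ s in Set.Iic x, Real.exp (-(∫ r in s..x, a r)) * f s)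
        (∫ s in Set.Iic y, Real.exp (-(∫ r in s..y, a r)) * f s) ≤ Real.toNNReal L * dist x y
    rw [Real.coe_toNNReal _ hL0, Real.dist_eq, Real.dist_eq]
    rcases le_total x y with h | h
    · rw [abs_sub_comm, abs_sub_comm x y, abs_of_nonneg (by linarith : (0:ℝ) ≤ y - x)]
      exact soLip α hα a ha hac Ca hCa f hfc Cf hCf h
    · rw [abs_of_nonneg (by linarith : (0:ℝ) ≤ x - y)]
      exact soLip α hα a ha hac Ca hCa f hfc Cf hCf h
  · -- slow oscillation
    intro ω ε hε
    have htend : Filter.Tendsto (fun T => 2*Cf*Real.exp (-(α*T))/α) Filter.atTop (nhds 0) := by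
      have h1 : Filter.Tendsto (fun T : ℝ => -(α*T)) Filter.atTop Filter.atBot := by
        apply Filter.tendsto_neg_atTop_atBot.comp
        exact Filter.Tendsto.const_mul_atTop hα Filter.tendsto_id
      have h2 := Real.tendsto_exp_atBot.comp h1
      have h4 := (h2.const_mul (2*Cf)).div_const α
      simpa using h4
    obtain ⟨T, hTε, hT1⟩ :=
      ((htend.eventually_lt_const (by linarith : (0:ℝ) < ε/3)).and
        (Filter.eventually_ge_atTop 1)).exists
    set K := T + 2*Cf/α^2 with hKdef
    have hK0 : 0 ≤ K := by
      have : 0 ≤ 2*Cf/α^2 := by positivity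
      rw [hKdef]; linarith
    set δ := min (α/2) (ε/(3*(K+1))) with hδdef
    have h3K : (0:ℝ) < 3*(K+1) := by linarith
    have hδ0 : 0 < δ := by
      rw [hδdef]; exact lt_min (by linarith) (div_pos hε h3K)
    have hδα : δ ≤ α/2 := by rw [hδdef]; exact min_le_left _ _
    have hδK : δ*T + Cf*(2*δ/α^2) < ε/3 := by
      have hδle : δ ≤ ε/(3*(K+1)) := by rw [hδdef]; exact min_le_right _ _
      have h1 : δ*(3*(K+1)) ≤ ε := (le_div_iff₀ h3K).1 hδle
      have h2 : δ*T + Cf*(2*δ/α^2) = δ*K := by rw [hKdef]; ring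
      rw [h2]
      ring_nf at h1 ⊢
      nlinarith [hδ0]
    obtain ⟨Ma, hMa⟩ := hsa.2.2 ω δ hδ0
    obtain ⟨Mf, hMf⟩ := hsf.2.2 ω δ hδ0
    set M₀ := max (max Ma Mf) 0 with hM₀def
    refine ⟨M₀ + T, fun t ht => ?_⟩
    have hwin : ∀ s, t - T ≤ s → s ≤ t → Ma ≤ |s| ∧ Mf ≤ |s| := by
      intro s h1 h2
      have hMa0 : Ma ≤ M₀ := by rw [hM₀def]; exact le_trans (le_max_left _ _) (le_max_left _ _)
      have hMf0 : Mf ≤ M₀ := by rw [hM₀def]; exact le_trans (le_max_right _ _) (le_max_left _ _)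
      have hM00 : (0:ℝ) ≤ M₀ := by rw [hM₀def]; exact le_max_right _ _
      rcases le_abs.1 ht with h | h
      · have hs : M₀ ≤ s := by linarith
        exact ⟨le_trans hMa0 (hs.trans (le_abs_self s)),
          le_trans hMf0 (hs.trans (le_abs_self s))⟩
      · have hs : M₀ ≤ -s := by linarith
        exact ⟨le_trans hMa0 (hs.trans (neg_le_abs s)),
          le_trans hMf0 (hs.trans (neg_le_abs s))⟩
    have hwf : ∀ s, t - T ≤ s → s ≤ t → |f (s+ω) - f s| ≤ δ :=
      fun s h1 h2 => (hMf s (hwin s h1 h2).2).le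
    have hwa : ∀ s, t - T ≤ s → s ≤ t → |a (s+ω) - a s| ≤ δ :=
      fun s h1 h2 => (hMa s (hwin s h1 h2).1).le
    have hshift : (∫ s in Set.Iic (t+ω), Real.exp (-(∫ r in s..(t+ω), a r)) * f s) =
        ∫ s in Set.Iic t, Real.exp (-(∫ r in s..t, a (r+ω))) * f (s+ω) := by
      rw [soIic_shift (fun s => Real.exp (-(∫ r in s..(t+ω), a r)) * f s) t ω]
      have : (fun s => Real.exp (-(∫ r in (s+ω)..(t+ω), a r)) * f (s+ω)) =
          (fun s => Real.exp (-(∫ r in s..t, a (r+ω))) * f (s+ω)) :=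
        funext fun s => by rw [intervalIntegral.integral_comp_add_right]
      rw [this]
    show |(∫ s in Set.Iic (t+ω), Real.exp (-(∫ r in s..(t+ω), a r)) * f s) -
        ∫ s in Set.Iic t, Real.exp (-(∫ r in s..t, a r)) * f s| < ε
    rw [hshift]
    have key := soOscBound α hα a ha hac f hfc Cf hCf ω δ T t hδ0 hδα (by linarith) hwf hwa
    calc |(∫ s in Set.Iic t, Real.exp (-(∫ r in s..t, a (r+ω))) * f (s+ω)) -
        ∫ s in Set.Iic t, Real.exp (-(∫ r in s..t, a r)) * f s|
        ≤ 2*Cf*Real.exp (-(α*T))/α + (δ*T + Cf*(2*δ/α^2)) := key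
      _ < ε/3 + ε/3 := add_lt_add hTε hδK
      _ < ε := by linarith
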